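/- Let C_2 ⊆ C_1 ⊆ F_q^n be nested linear codes with ℓ = dim C_1 − dim C_2. Fix bases b_1,...,b_{k_2} of C_2 extended to b_1,...,b_{k_1} of C_1 (k_1 = k_2 + ℓ). For a set A = {i_1 < ... < i_m} ⊆ {1,...,n} and realizable shares c'_{i_1},...,c'_{i_m} (i.e., some codeword c = Σ a_j b_j + Σ s_t b_{k_2+t} agrees with them on A), the set of secrets (s_1,...,s_ℓ) ∈ F_q^ℓ consistent with these shares is a coset of a linear subspace of F_q^ℓ of dimension dim (C_1)_Ā − dim (C_2)_Ā; in particular its cardinality is q^{dim (C_1)_Ā − dim (C_2)_Ā}. -/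

import Mathlib

set_option maxHeartbeats 1000000
set_option synthInstance.maxHeartbeats 400000


open Classical

noncomputable def projMap (F : Type*) [Field F] {n : ℕ} (A : Finset (Fin n)) :
    (Fin n → F) →ₗ[F] (Fin n → F) where
  toFun x := fun i => if i ∈ A then x i else 0
  map_add' x y := by
    funext i; by_cases h : i ∈ A <;> simp [h]
  map_smul' c x := by
    funext i; by_cases h : i ∈ A <;> simp [h]

def zeroOutside (F : Type*) [Field F] {n : ℕ} (A : Finset (Fin n)) :
    Submodule F (Fin n → F) where
  carrier := {x | ∀ i, i ∉ A → x i = 0}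
  add_mem' := by
    intro x y hx hy i hi
    simp only [Pi.add_apply]
    simp [hx i hi, hy i hi]
  zero_mem' := fun i _ => rfl
  smul_mem' := by
    intro c x hx i hi
    simp [hx i hi]

def dualCode {F : Type*} [Field F] {n : ℕ} (C : Submodule F (Fin n → F)) :
    Submodule F (Fin n → F) where
  carrier := {x | ∀ c ∈ C, ∑ i, x i * c i = 0}
  add_mem' := by
    intro x y hx hy c hc
    simp [add_mul, Finset.sum_add_distrib, hx c hc, hy c hc]
  zero_mem' := by intro c hc; simp
  smul_mem' := by
    intro a x hx c hc
    simp [smul_eq_mul, mul_assoc, ← Finset.mul_sum, hx c hc]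

def suppSet {F : Type*} [Field F] {n : ℕ} (D : Submodule F (Fin n → F)) : Set (Fin n) :=
  {i | ∃ x ∈ D, x i ≠ 0}

noncomputable def rghw {F : Type*} [Field F] {n : ℕ}
    (C1 C2 : Submodule F (Fin n → F)) (t : ℕ) : ℕ :=
  sInf {w | ∃ D : Submodule F (Fin n → F), D ≤ C1 ∧ D ⊓ C2 = ⊥ ∧
    Module.finrank F ↥D = t ∧ (suppSet D).ncard = w}

noncomputable def minDist {F : Type*} [Field F] {n : ℕ} (C : Submodule F (Fin n → F)) : ℕ :=
  sInf {w | ∃ c ∈ C, c ≠ (0 : Fin n → F) ∧ ({i | c i ≠ 0} : Set (Fin n)).ncard = w}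

theorem consistent_secrets_coset {F : Type*} [Field F] [Fintype F] {n k2 ℓ : ℕ}
    (b : Fin (k2 + ℓ) → (Fin n → F)) (hb : LinearIndependent F b)
    (C1 C2 : Submodule F (Fin n → F))
    (hC1 : C1 = Submodule.span F (Set.range b))
    (hC2 : C2 = Submodule.span F (Set.range (fun j : Fin k2 => b (Fin.castAdd ℓ j))))
    (A : Finset (Fin n)) (c' : Fin n → F)
    (hreal : ∃ (a : Fin k2 → F) (s : Fin ℓ → F), ∀ i ∈ A,
      (∑ j : Fin k2, a j • b (Fin.castAdd ℓ j)
        + ∑ t : Fin ℓ, s t • b (Fin.natAdd k2 t)) i = c' i) :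
    ∃ (V : Submodule F (Fin ℓ → F)) (p : Fin ℓ → F),
      {s : Fin ℓ → F | ∃ a : Fin k2 → F, ∀ i ∈ A,
          (∑ j : Fin k2, a j • b (Fin.castAdd ℓ j)
            + ∑ t : Fin ℓ, s t • b (Fin.natAdd k2 t)) i = c' i}
        = (fun v => p + v) '' (V : Set (Fin ℓ → F)) ∧
      Module.finrank F ↥V =
        Module.finrank F ↥(C1 ⊓ zeroOutside F Aᶜ)
          - Module.finrank F ↥(C2 ⊓ zeroOutside F Aᶜ) ∧
      Nat.card {s : Fin ℓ → F | ∃ a : Fin k2 → F, ∀ i ∈ A,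
          (∑ j : Fin k2, a j • b (Fin.castAdd ℓ j)
            + ∑ t : Fin ℓ, s t • b (Fin.natAdd k2 t)) i = c' i}
        = Fintype.card F ^
            (Module.finrank F ↥(C1 ⊓ zeroOutside F Aᶜ)
              - Module.finrank F ↥(C2 ⊓ zeroOutside F Aᶜ)) := by
  classical
  -- the two component linear maps
  set T1 : (Fin k2 → F) →ₗ[F] (Fin n → F) :=
    Fintype.linearCombination F (fun j : Fin k2 => b (Fin.castAdd ℓ j)) with hT1def
  set T2 : (Fin ℓ → F) →ₗ[F] (Fin n → F) :=
    Fintype.linearCombination F (fun t : Fin ℓ => b (Fin.natAdd k2 t)) with hT2def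
  set T : ((Fin k2 → F) × (Fin ℓ → F)) →ₗ[F] (Fin n → F) := T1.coprod T2 with hTdef
  set π : (Fin n → F) →ₗ[F] (Fin n → F) := projMap F A with hπdef
  have hπapp : ∀ (x : Fin n → F) (i : Fin n), π x i = if i ∈ A then x i else 0 :=
    fun x i => rfl
  have hTapp : ∀ (a : Fin k2 → F) (s : Fin ℓ → F),
      (∑ j : Fin k2, a j • b (Fin.castAdd ℓ j)
        + ∑ t : Fin ℓ, s t • b (Fin.natAdd k2 t)) = T (a, s) := by
    intro a s
    simp [hTdef, hT1def, hT2def, Fintype.linearCombination_apply]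
  have hπeq : ∀ x y : Fin n → F, (π x = π y ↔ ∀ i ∈ A, x i = y i) := by
    intro x y
    constructor
    · intro h i hi
      have := congrFun h i
      rw [hπapp, hπapp, if_pos hi, if_pos hi] at this
      exact this
    · intro h
      funext i
      rw [hπapp, hπapp]
      by_cases hi : i ∈ A
      · simp [hi, h i hi]
      · simp [hi]
  -- zeroOutside F Aᶜ is the kernel of π
  have hZ : zeroOutside F Aᶜ = LinearMap.ker π := by
    ext x
    have hm : x ∈ zeroOutside F Aᶜ ↔ ∀ i, i ∉ Aᶜ → x i = 0 := Iff.rfl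
    rw [hm, LinearMap.mem_ker]
    have : (π x = 0) ↔ ∀ i ∈ A, x i = (0 : F) := by
      have := hπeq x 0
      simpa using this
    rw [this]
    constructor
    · intro h i hi
      exact h i (by simp [hi])
    · intro h i hi
      exact h i (by simpa using hi)
  -- injectivity of T
  have hTinj : Function.Injective T := by
    rw [← LinearMap.ker_eq_bot]
    rw [Submodule.eq_bot_iff]
    rintro ⟨a, s⟩ hx
    rw [LinearMap.mem_ker] at hx
    have hsum : ∑ i : Fin (k2 + ℓ), (Fin.addCases a s i : F) • b i = 0 := by
      rw [Fin.sum_univ_add]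
      simpa [hTdef, hT1def, hT2def, Fintype.linearCombination_apply] using hx
    have hzero : ∀ i : Fin (k2 + ℓ), (Fin.addCases a s i : F) = 0 :=
      Fintype.linearIndependent_iff.mp hb _ hsum
    have ha : a = 0 := by
      funext j
      have := hzero (Fin.castAdd ℓ j)
      simpa using this
    have hs : s = 0 := by
      funext t
      have := hzero (Fin.natAdd k2 t)
      simpa using this
    simp [ha, hs, Prod.ext_iff]
  -- ranges
  have hrangeT1 : LinearMap.range T1 = C2 := by
    rw [hC2, hT1def, Fintype.range_linearCombination]
  have hrangeT : LinearMap.range T = C1 := by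
    rw [hTdef, LinearMap.range_coprod, hrangeT1, hC2, hC1, hT2def,
      Fintype.range_linearCombination, ← Submodule.span_union]
    congr 1
    ext x
    constructor
    · rintro (⟨j, rfl⟩ | ⟨t, rfl⟩) <;> exact ⟨_, rfl⟩
    · rintro ⟨i, rfl⟩
      exact Fin.addCases (motive := fun i => b i ∈ _)
        (fun j => Or.inl ⟨j, rfl⟩) (fun t => Or.inr ⟨t, rfl⟩) i
  -- the kernel submodule and its image under snd
  set K : Submodule F ((Fin k2 → F) × (Fin ℓ → F)) := LinearMap.ker (π ∘ₗ T) with hKdef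
  set Vs : Submodule F (Fin ℓ → F) :=
    Submodule.map (LinearMap.snd F (Fin k2 → F) (Fin ℓ → F)) K with hVdef
  obtain ⟨a0, s0, h0⟩ := hreal
  have h0' : π (T (a0, s0)) = π c' := by
    rw [hπeq]
    intro i hi
    rw [← hTapp]
    exact h0 i hi
  -- the coset description
  have hset : {s : Fin ℓ → F | ∃ a : Fin k2 → F, ∀ i ∈ A,
      (∑ j : Fin k2, a j • b (Fin.castAdd ℓ j)
        + ∑ t : Fin ℓ, s t • b (Fin.natAdd k2 t)) i = c' i}
      = (fun v => s0 + v) '' (Vs : Set (Fin ℓ → F)) := by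
    ext s
    simp only [Set.mem_setOf_eq, Set.mem_image, SetLike.mem_coe]
    constructor
    · rintro ⟨a, ha⟩
      have ha' : π (T (a, s)) = π c' := by
        rw [hπeq]
        intro i hi
        rw [← hTapp]
        exact ha i hi
      refine ⟨s - s0, ?_, by ring⟩
      refine ⟨(a - a0, s - s0), ?_, rfl⟩
      simp only [SetLike.mem_coe, hKdef, LinearMap.mem_ker]
      have : (a - a0, s - s0) = (a, s) - (a0, s0) := rfl
      rw [this, LinearMap.comp_apply, map_sub, map_sub, ha', h0', sub_self]
    · rintro ⟨v, ⟨⟨a1, v1⟩, hK, hsnd⟩, rfl⟩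
      simp only [SetLike.mem_coe, hKdef, LinearMap.mem_ker] at hK
      have hsnd' : v1 = v := hsnd
      subst hsnd'
      refine ⟨a0 + a1, ?_⟩
      intro i hi
      rw [hTapp]
      have : (a0 + a1, s0 + v1) = (a0, s0) + (a1, v1) := rfl
      rw [this, map_add]
      have heq : π (T ((a0, s0) + (a1, v1))) = π c' := by
        rw [map_add, map_add]
        rw [LinearMap.comp_apply] at hK
        rw [hK, add_zero, h0']
      rw [← map_add]
      exact (hπeq _ _).mp heq i hi
  -- dimension computations
  have hmapK : Submodule.map T K = C1 ⊓ LinearMap.ker π := by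
    rw [hKdef, LinearMap.ker_comp, Submodule.map_comap_eq, hrangeT, inf_comm]
  have hdimK : Module.finrank F ↥K = Module.finrank F ↥(C1 ⊓ zeroOutside F Aᶜ) := by
    rw [hZ, ← hmapK]
    exact (Submodule.equivMapOfInjective T hTinj K).finrank_eq
  -- the restriction of snd to K
  set f : ↥K →ₗ[F] (Fin ℓ → F) :=
    (LinearMap.snd F (Fin k2 → F) (Fin ℓ → F)) ∘ₗ K.subtype with hfdef
  have hrangef : LinearMap.range f = Vs := by
    rw [hfdef, LinearMap.range_comp, Submodule.range_subtype, hVdef]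
  set W : Submodule F ((Fin k2 → F) × (Fin ℓ → F)) :=
    K ⊓ LinearMap.ker (LinearMap.snd F (Fin k2 → F) (Fin ℓ → F)) with hWdef
  have hkerf : LinearMap.ker f = Submodule.comap K.subtype W := by
    rw [hfdef, LinearMap.ker_comp, hWdef, Submodule.comap_inf]
    have : Submodule.comap K.subtype K = ⊤ := by
      rw [Submodule.eq_top_iff']
      intro x
      exact x.2
    rw [this, top_inf_eq]
  have hdimkerf : Module.finrank F ↥(LinearMap.ker f) = Module.finrank F ↥W := by
    rw [hkerf]
    exact (Submodule.comapSubtypeEquivOfLe (inf_le_left : W ≤ K)).finrank_eq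
  have hmapW : Submodule.map T W = C2 ⊓ zeroOutside F Aᶜ := by
    rw [hZ]
    ext x
    constructor
    · rintro ⟨⟨a, s⟩, ⟨hK, hs⟩, rfl⟩
      simp only [SetLike.mem_coe, hKdef, LinearMap.mem_ker, LinearMap.comp_apply] at hK
      have hs0 : s = 0 := hs
      subst hs0
      have hx : T (a, (0 : Fin ℓ → F)) = T1 a := by
        simp [hTdef]
      constructor
      · rw [hx, ← hrangeT1]; exact ⟨a, rfl⟩
      · rw [SetLike.mem_coe, LinearMap.mem_ker] at *
        exact hK
    · rintro ⟨hx2, hxk⟩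
      rw [← hrangeT1] at hx2
      obtain ⟨a, rfl⟩ := hx2
      refine ⟨(a, 0), ⟨?_, ?_⟩, ?_⟩
      · simp only [SetLike.mem_coe, hKdef, LinearMap.mem_ker, LinearMap.comp_apply]
        have hx : T (a, (0 : Fin ℓ → F)) = T1 a := by simp [hTdef]
        rw [hx]
        exact hxk
      · rfl
      · simp [hTdef]
  have hdimW : Module.finrank F ↥W = Module.finrank F ↥(C2 ⊓ zeroOutside F Aᶜ) := by
    rw [← hmapW]
    exact (Submodule.equivMapOfInjective T hTinj W).finrank_eq
  have hrn := LinearMap.finrank_range_add_finrank_ker f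
  rw [hrangef, hdimkerf, hdimW] at hrn
  have hdimV : Module.finrank F ↥Vs =
      Module.finrank F ↥(C1 ⊓ zeroOutside F Aᶜ)
        - Module.finrank F ↥(C2 ⊓ zeroOutside F Aᶜ) := by
    omega
    -- fallback below
  refine ⟨Vs, s0, hset, hdimV, ?_⟩
  rw [hset]
  have hVfin : Fintype ↥Vs := Fintype.ofFinite _
  have hcard1 : Nat.card ((fun v => s0 + v) '' (Vs : Set (Fin ℓ → F)))
      = Nat.card (Vs : Set (Fin ℓ → F)) :=
    Nat.card_image_of_injective (fun x y h => by simpa using h) _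
  rw [hcard1]
  have : Nat.card (Vs : Set (Fin ℓ → F)) = Nat.card ↥Vs := rfl
  rw [this, ← hdimV, Nat.card_eq_fintype_card, Module.card_eq_pow_finrank (K := F) (V := ↥Vs)]
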